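/- arXiv:2301.13328 — 3 statements merged into one kernel-verified Lean document; each statement's English description precedes it below -/
import Mathlib

section
/- For any Boolean function f and any variable x, the number of prime implicants of f is at least the maximum of the number of prime implicants of f|¬x and of f|x. More precisely, for each literal ℓ ∈ {x, ¬x}, the map sending a prime implicant t of f to the restriction t|ℓ (remove any literal on x after conditioning) induces a surjection from IP(f) onto the entailment-maximal elements of {t|ℓ : t ∈ IP(f)}, and IP(f|ℓ) equals that set of maximal elements; hence |IP(f|ℓ)| ≤ |IP(f)|. -/
abbrev Term (V : Type*) := V → Option Bool

def Extends {V : Type*} (a : V → Bool) (t : Term V) : Prop :=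
  ∀ v b, t v = some b → a v = b

def SubTerm {V : Type*} (s t : Term V) : Prop :=
  ∀ v b, s v = some b → t v = some b

def Implicant {V : Type*} (f : (V → Bool) → Bool) (t : Term V) : Prop :=
  ∀ a, Extends a t → f a = true

def PrimeImplicant {V : Type*} (f : (V → Bool) → Bool) (t : Term V) : Prop :=
  Implicant f t ∧ ∀ s, SubTerm s t → Implicant f s → s = t

def IP {V : Type*} (f : (V → Bool) → Bool) : Set (Term V) :=
  {t | PrimeImplicant f t}

def Compatible {V : Type*} (t t' : Term V) : Prop :=
  ∀ v b b', t v = some b → t' v = some b' → b = b'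

def combine {V : Type*} (t t' : Term V) : Term V :=
  fun v => (t v).orElse (fun _ => t' v)

def maxSet {V : Type*} (S : Set (Term V)) : Set (Term V) :=
  {t ∈ S | ∀ t' ∈ S, SubTerm t' t → t' = t}

def fAnd {V : Type*} (f g : (V → Bool) → Bool) : (V → Bool) → Bool :=
  fun a => f a && g a

def restrict {V : Type*} [DecidableEq V] (f : (V → Bool) → Bool) (x : V) (b : Bool) :
    (V → Bool) → Bool :=
  fun a => f (Function.update a x b)

def SR {V : Type*} (f : (V → Bool) → Bool) (a : V → Bool) : Set (Term V) :=
  {t | PrimeImplicant f t ∧ Extends a t}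

section Aux
variable {V : Type*}

theorem subTerm_trans {s t u : Term V} (h1 : SubTerm s t) (h2 : SubTerm t u) : SubTerm s u :=
  fun v b hv => h2 v b (h1 v b hv)

theorem subTerm_antisymm {s t : Term V} (h1 : SubTerm s t) (h2 : SubTerm t s) : s = t := by
  funext v
  cases hs : s v with
  | some c => rw [h1 v c hs]
  | none =>
    cases ht : t v with
    | none => rfl
    | some c => rw [h2 v c ht] at hs; exact absurd hs (by simp)

def supp [Fintype V] (t : Term V) : Finset V :=
  Finset.univ.filter (fun v => t v ≠ none)

theorem supp_subset [Fintype V] {s t : Term V} (h : SubTerm s t) : supp s ⊆ supp t := by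
  intro v hv
  simp only [supp, Finset.mem_filter, Finset.mem_univ, true_and] at hv ⊢
  cases hs : s v with
  | none => exact absurd hs hv
  | some c => rw [h v c hs]; simp

theorem eq_of_subTerm_card [Fintype V] {s t : Term V} (h : SubTerm s t)
    (hc : (supp t).card ≤ (supp s).card) : s = t := by
  have hsupp : supp s = supp t := Finset.eq_of_subset_of_card_le (supp_subset h) hc
  funext v
  cases ht : t v with
  | some c =>
    have hv : v ∈ supp s := by rw [hsupp]; simp [supp, ht]
    simp only [supp, Finset.mem_filter, Finset.mem_univ, true_and] at hv
    cases hs : s v with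
    | none => exact absurd hs hv
    | some c' => rw [h v c' hs] at ht; rw [ht]
  | none =>
    cases hs : s v with
    | none => rfl
    | some c => rw [h v c hs] at ht; exact absurd ht (by simp)

theorem exists_prime_subterm [Fintype V] (f : (V → Bool) → Bool) (t0 : Term V)
    (h : Implicant f t0) : ∃ t, PrimeImplicant f t ∧ SubTerm t t0 := by
  classical
  set A : Set (Term V) := {t | SubTerm t t0 ∧ Implicant f t} with hA
  have ht0A : t0 ∈ A := ⟨fun v b h => h, h⟩
  set M : Set ℕ := (fun t => (supp t).card) '' A with hM
  have hMne : M.Nonempty := ⟨_, t0, ht0A, rfl⟩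
  obtain ⟨t, htA, htm⟩ := Nat.sInf_mem hMne
  refine ⟨t, ⟨htA.2, ?_⟩, htA.1⟩
  intro s hst hsi
  have hsA : s ∈ A := ⟨subTerm_trans hst htA.1, hsi⟩
  have hle : sInf M ≤ (supp s).card := Nat.sInf_le ⟨s, hsA, rfl⟩
  have htm2 : (supp t).card = sInf M := by simpa using htm
  exact eq_of_subTerm_card hst (htm2.le.trans hle)

variable [DecidableEq V]

/-- (A) -/
theorem implicant_restrict [Fintype V] {f : (V → Bool) → Bool} {x : V} {b : Bool} {t : Term V}
    (ht : Implicant f t) (hx : t x ≠ some (!b)) :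
    Implicant (restrict f x b) (Function.update t x none) := by
  intro a ha
  apply ht
  intro v c hv
  by_cases hvx : v = x
  · subst hvx
    have hcb : c = b := by
      cases c <;> cases b <;> simp_all
    rw [hcb]; simp [Function.update]
  · have : Function.update t x none v = some c := by simp [Function.update, hvx, hv]
    rw [Function.update]; simp [hvx]
    exact ha v c this

/-- (B) -/
theorem implicant_of_restrict [Fintype V] {f : (V → Bool) → Bool} {x : V} {b : Bool} {s : Term V}
    (hs : Implicant (restrict f x b) s) (hx : s x = none) :
    Implicant f (Function.update s x b) := by
  intro a ha
  have hab : a x = b := ha x b (by simp [Function.update])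
  have has : Extends a s := by
    intro v c hv
    by_cases hvx : v = x
    · subst hvx; rw [hx] at hv; exact absurd hv (by simp)
    · exact ha v c (by simp [Function.update, hvx, hv])
  have := hs a has
  rwa [restrict, ← hab, Function.update_eq_self] at this

/-- (C): restriction ignores x -/
theorem implicant_restrict_update_none [Fintype V] {f : (V → Bool) → Bool} {x : V} {b : Bool}
    {s : Term V} (hs : Implicant (restrict f x b) s) :
    Implicant (restrict f x b) (Function.update s x none) := by
  intro a ha
  cases hsx : s x with
  | none =>
    have : Function.update s x none = s := by rw [← hsx, Function.update_eq_self]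
    rw [this] at ha
    exact hs a ha
  | some c =>
    have ha' : Extends (Function.update a x c) s := by
      intro v d hv
      by_cases hvx : v = x
      · subst hvx; rw [hsx] at hv; injection hv with h; rw [← h]; simp [Function.update]
      · simp only [Function.update, dif_neg hvx]
        exact ha v d (by simp [Function.update, hvx, hv])
    have := hs _ ha'
    rwa [restrict, Function.update_idem] at this

theorem prime_restrict_x_none [Fintype V] {f : (V → Bool) → Bool} {x : V} {b : Bool}
    {s : Term V} (hs : PrimeImplicant (restrict f x b) s) : s x = none := by
  have h1 : SubTerm (Function.update s x none) s := by
    intro v c hv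
    by_cases hvx : v = x
    · subst hvx; simp [Function.update] at hv
    · simpa [Function.update, hvx] using hv
  have := hs.2 _ h1 (implicant_restrict_update_none hs.1)
  have := congrFun this x
  simp [Function.update] at this
  exact this.symm

end Aux

/-- IP(f|ℓ) = max({t|ℓ : t ∈ IP(f), t consistent with ℓ}, ⊨),
hence |IP(f|ℓ)| ≤ |IP(f)|. -/
theorem stmt4 {V : Type*} [Fintype V] [DecidableEq V] (f : (V → Bool) → Bool)
    (x : V) (b : Bool) :
    IP (restrict f x b) =
      maxSet {s | ∃ t ∈ IP f, t x ≠ some (!b) ∧ s = Function.update t x none} ∧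
    (IP (restrict f x b)).ncard ≤ (IP f).ncard := by
  classical
  set g := restrict f x b with hg
  set S : Set (Term V) := {s | ∃ t ∈ IP f, t x ≠ some (!b) ∧ s = Function.update t x none}
    with hS
  have hSimp : ∀ s ∈ S, Implicant g s := by
    rintro s ⟨t, ht, htx, rfl⟩
    exact implicant_restrict ht.1 htx
  have hmain : IP g = maxSet S := by
    ext s
    constructor
    · intro hs
      have hsx : s x = none := prime_restrict_x_none hs
      have himp : Implicant f (Function.update s x b) := implicant_of_restrict hs.1 hsx
      obtain ⟨t, htp, hts⟩ := exists_prime_subterm f _ himp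
      have htx : t x ≠ some (!b) := by
        intro hc
        have := hts x (!b) hc
        simp [Function.update] at this
      have hsub : SubTerm (Function.update t x none) s := by
        intro v c hv
        by_cases hvx : v = x
        · subst hvx; simp [Function.update] at hv
        · rw [Function.update_of_ne hvx] at hv
          have := hts v c hv
          rwa [Function.update_of_ne hvx] at this
      have hmem : Function.update t x none ∈ S := ⟨t, htp, htx, rfl⟩
      have heq : Function.update t x none = s :=
        hs.2 _ hsub (hSimp _ hmem)
      refine ⟨heq ▸ hmem, ?_⟩
      intro s' hs' hsub'
      exact hs.2 _ hsub' (hSimp _ hs')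
    · rintro ⟨hsS, hmax⟩
      have hsx : s x = none := by
        obtain ⟨t, ht, htx, rfl⟩ := hsS
        simp [Function.update]
      refine ⟨hSimp _ hsS, ?_⟩
      intro s' hsub' himp'
      have hs'x : s' x = none := by
        cases h : s' x with
        | none => rfl
        | some c => rw [hsub' x c h] at hsx; exact absurd hsx (by simp)
      have himpf : Implicant f (Function.update s' x b) := implicant_of_restrict himp' hs'x
      obtain ⟨t', htp', hts'⟩ := exists_prime_subterm f _ himpf
      have htx' : t' x ≠ some (!b) := by
        intro hc
        have := hts' x (!b) hc
        simp [Function.update] at this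
      have hsub2 : SubTerm (Function.update t' x none) s' := by
        intro v c hv
        by_cases hvx : v = x
        · subst hvx; simp [Function.update] at hv
        · rw [Function.update_of_ne hvx] at hv
          have := hts' v c hv
          rwa [Function.update_of_ne hvx] at this
      have hmem2 : Function.update t' x none ∈ S := ⟨t', htp', htx', rfl⟩
      have heq2 : Function.update t' x none = s :=
        hmax _ hmem2 (subTerm_trans hsub2 hsub')
      exact subTerm_antisymm hsub' (heq2 ▸ hsub2)
  refine ⟨hmain, ?_⟩
  have hsub : IP g ⊆ (fun t => Function.update t x none) '' (IP f) := by
    rw [hmain]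
    rintro s ⟨⟨t, ht, _, rfl⟩, _⟩
    exact ⟨t, ht, rfl⟩
  calc (IP g).ncard ≤ ((fun t => Function.update t x none) '' (IP f)).ncard :=
        Set.ncard_le_ncard hsub (Set.toFinite _)
    _ ≤ (IP f).ncard := Set.ncard_image_le (Set.toFinite _)
end

section
/- Let f and g be Boolean functions over disjoint variable sets, and let a be a total assignment over (a superset of) var(f) ∪ var(g) satisfying f ∧ g. Then the sufficient reasons for a given f ∧ g are exactly the conjunctions t ∧ t' where t is a sufficient reason for a given f and t' is a sufficient reason for a given g; i.e., SR(f ∧ g, a) = {t ∧ t' : t ∈ SR(f, a), t' ∈ SR(g, a)}. -/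
section Helpers

variable {V : Type*}

open Classical in
/-- Restriction of a term to a finite set of variables. -/
noncomputable def restr (t : Term V) (X : Finset V) : Term V :=
  fun v => if v ∈ X then t v else none

lemma combine_some {t t' : Term V} {v : V} {c : Bool} (h : t v = some c) :
    combine t t' v = some c := by
  unfold combine; rw [h]; rfl

lemma combine_none {t t' : Term V} {v : V} (h : t v = none) :
    combine t t' v = t' v := by
  unfold combine; rw [h]; rfl

open Classical in
lemma restr_mem {t : Term V} {X : Finset V} {v : V} (h : v ∈ X) :
    restr t X v = t v := by simp [restr, h]

open Classical in
lemma restr_notMem {t : Term V} {X : Finset V} {v : V} (h : v ∉ X) :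
    restr t X v = none := by simp [restr, h]

lemma restr_some {t : Term V} {X : Finset V} {v : V} {c : Bool}
    (h : restr t X v = some c) : t v = some c ∧ v ∈ X := by
  by_cases hv : v ∈ X
  · rw [restr_mem hv] at h; exact ⟨h, hv⟩
  · rw [restr_notMem hv] at h; exact absurd h (by simp)

/-- The support of a prime implicant of a function depending only on `X`
is contained in `X`. -/
lemma prime_supp (X : Finset V) (f : (V → Bool) → Bool)
    (hf : ∀ a a' : V → Bool, (∀ v ∈ X, a v = a' v) → f a = f a')
    {t : Term V} (ht : PrimeImplicant f t) :
    ∀ v b, t v = some b → v ∈ X := by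
  classical
  intro v b hvb
  by_contra hv
  set s : Term V := fun w => if w = v then none else t w with hs
  have hsub : SubTerm s t := by
    intro w c hw
    simp only [hs] at hw
    by_cases hwv : w = v
    · simp [hwv] at hw
    · simpa [hwv] using hw
  have himp : Implicant f s := by
    intro b' hb'
    have h1 : f (Function.update b' v b) = true := by
      apply ht.1
      intro w c hw
      by_cases hwv : w = v
      · subst hwv
        rw [hvb] at hw
        rw [Function.update_self]
        exact Option.some.inj hw
      · rw [Function.update_of_ne hwv]
        exact hb' w c (by simp [hs, hwv, hw])
    have h2 : f b' = f (Function.update b' v b) := by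
      apply hf
      intro w hw
      have hwv : w ≠ v := fun h => hv (h ▸ hw)
      rw [Function.update_of_ne hwv]
    rw [h2]; exact h1
  have heq := ht.2 s hsub himp
  have h3 : s v = some b := by rw [heq]; exact hvb
  simp [hs] at h3

/-- Restricting an implicant of `f` to `X` stays an implicant, provided `f`
depends only on `X` and some assignment `a` agrees with the off-`X` part. -/
lemma implicant_restr (X : Finset V) (f : (V → Bool) → Bool)
    (hf : ∀ a a' : V → Bool, (∀ v ∈ X, a v = a' v) → f a = f a')
    (a : V → Bool) (u : Term V)
    (hu : Implicant f u) (hua : ∀ v b, u v = some b → v ∉ X → a v = b) :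
    Implicant f (restr u X) := by
  classical
  intro b hb
  have h1 : f (fun v => if v ∈ X then b v else a v) = true := by
    apply hu
    intro v c hvc
    by_cases hv : v ∈ X
    · simp only [hv, if_true]
      exact hb v c (by rw [restr_mem hv]; exact hvc)
    · simp only [hv, if_false]
      exact hua v c hvc hv
  have h2 : f b = f (fun v => if v ∈ X then b v else a v) := by
    apply hf
    intro v hv
    simp [hv]
  rw [h2]; exact h1

lemma extends_combine_left {b : V → Bool} {t t' : Term V}
    (h : Extends b (combine t t')) : Extends b t := by
  intro v c hvc
  exact h v c (combine_some hvc)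

lemma extends_combine_right {b : V → Bool} {t t' : Term V}
    (hdis : ∀ v c, t' v = some c → t v = none)
    (h : Extends b (combine t t')) : Extends b t' := by
  intro v c hvc
  exact h v c (by rw [combine_none (hdis v c hvc)]; exact hvc)

end Helpers

/-- SR(f ∧ g, a) = {t ∧ t' : t ∈ SR(f,a), t' ∈ SR(g,a)} for disjoint
variable sets. -/
theorem stmt11 {V : Type*} (X Y : Finset V) (hXY : Disjoint X Y)
    (f g : (V → Bool) → Bool)
    (hf : ∀ a a' : V → Bool, (∀ v ∈ X, a v = a' v) → f a = f a')
    (hg : ∀ a a' : V → Bool, (∀ v ∈ Y, a v = a' v) → g a = g a')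
    (a : V → Bool) (ha : fAnd f g a = true) :
    SR (fAnd f g) a = {u | ∃ t ∈ SR f a, ∃ t' ∈ SR g a, u = combine t t'} := by
  classical
  have hnotXY : ∀ v, v ∈ X → v ∉ Y := fun v hx hy =>
    Finset.disjoint_left.1 hXY hx hy
  have hnotYX : ∀ v, v ∈ Y → v ∉ X := fun v hy hx =>
    Finset.disjoint_left.1 hXY hx hy
  have hfg : ∀ a a' : V → Bool, (∀ v ∈ X ∪ Y, a v = a' v) → fAnd f g a = fAnd f g a' := by
    intro a1 a2 h
    unfold fAnd
    rw [hf a1 a2 (fun v hv => h v (Finset.mem_union_left _ hv)),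
        hg a1 a2 (fun v hv => h v (Finset.mem_union_right _ hv))]
  ext u
  constructor
  · rintro ⟨hu, hue⟩
    have hsupp : ∀ v b, u v = some b → v ∈ X ∪ Y := prime_supp (X ∪ Y) _ hfg hu
    have huf : Implicant f u := by
      intro b hb
      have := hu.1 b hb
      simp only [fAnd, Bool.and_eq_true] at this
      exact this.1
    have hug : Implicant g u := by
      intro b hb
      have := hu.1 b hb
      simp only [fAnd, Bool.and_eq_true] at this
      exact this.2
    -- u = combine (restr u X) (restr u Y)
    have hcomb : u = combine (restr u X) (restr u Y) := by
      funext v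
      by_cases hx : v ∈ X
      · have hy := hnotXY v hx
        cases huv : u v with
        | some c =>
          exact (combine_some (by rw [restr_mem hx]; exact huv)).symm
        | none =>
          rw [combine_none (by rw [restr_mem hx]; exact huv), restr_notMem hy]
      · by_cases hy : v ∈ Y
        · rw [combine_none (restr_notMem hx), restr_mem hy]
        · cases huv : u v with
          | some c => exact absurd (hsupp v c huv) (by simp [hx, hy])
          | none =>
            rw [combine_none (restr_notMem hx), restr_notMem hy]
    have htimp : Implicant f (restr u X) :=
      implicant_restr X f hf a u huf (fun v b h _ => hue v b h)
    have ht'imp : Implicant g (restr u Y) :=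
      implicant_restr Y g hg a u hug (fun v b h _ => hue v b h)
    have hte : Extends a (restr u X) := fun v b h => hue v b (restr_some h).1
    have ht'e : Extends a (restr u Y) := fun v b h => hue v b (restr_some h).1
    have hdis : ∀ v c, restr u Y v = some c → restr u X v = none := fun v c h =>
      restr_notMem (hnotYX v (restr_some h).2)
    -- primality of the X-part
    have htprime : PrimeImplicant f (restr u X) := by
      refine ⟨htimp, fun s hst hsf => ?_⟩
      have hsX : ∀ v c, s v = some c → v ∈ X := fun v c h => (restr_some (hst v c h)).2
      have hsub : SubTerm (combine s (restr u Y)) u := by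
        intro v c h
        rw [hcomb]
        cases hsv : s v with
        | some d =>
          rw [combine_some hsv] at h
          exact combine_some ((hst v d hsv).trans h)
        | none =>
          rw [combine_none hsv] at h
          rw [combine_none (hdis v c h)]
          exact h
      have himp : Implicant (fAnd f g) (combine s (restr u Y)) := by
        intro b hb
        have hbs : Extends b s := extends_combine_left hb
        have hbt' : Extends b (restr u Y) := extends_combine_right
          (fun v c h => by
            cases hsv : s v with
            | none => rfl
            | some d => exact absurd (hsX v d hsv) (hnotYX v (restr_some h).2)) hb
        simp only [fAnd, Bool.and_eq_true]
        exact ⟨hsf b hbs, ht'imp b hbt'⟩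
      have heq := hu.2 (combine s (restr u Y)) hsub himp
      replace heq := heq.trans hcomb
      funext v
      by_cases hx : v ∈ X
      · have h1 : combine s (restr u Y) v = combine (restr u X) (restr u Y) v := by
          rw [heq]
        have ht'v : restr u Y v = none := restr_notMem (hnotXY v hx)
        cases hsv : s v with
        | some c =>
          rw [combine_some hsv] at h1
          cases htv : restr u X v with
          | some d => rw [combine_some htv] at h1; exact h1
          | none => rw [combine_none htv, ht'v] at h1; exact absurd h1 (by simp)
        | none =>
          rw [combine_none hsv, ht'v] at h1
          cases htv : restr u X v with
          | some d => rw [combine_some htv] at h1; exact absurd h1 (by simp)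
          | none => rfl
      · cases hsv : s v with
        | some c => exact absurd (hsX v c hsv) hx
        | none => exact (restr_notMem hx).symm
    -- primality of the Y-part
    have ht'prime : PrimeImplicant g (restr u Y) := by
      refine ⟨ht'imp, fun s hst hsg => ?_⟩
      have hsY : ∀ v c, s v = some c → v ∈ Y := fun v c h => (restr_some (hst v c h)).2
      have hdis2 : ∀ v c, s v = some c → restr u X v = none := fun v c h =>
        restr_notMem (hnotYX v (hsY v c h))
      have hsub : SubTerm (combine (restr u X) s) u := by
        intro v c h
        rw [hcomb]
        cases htv : restr u X v with
        | some d =>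
          rw [combine_some htv] at h
          rw [combine_some htv]
          exact h
        | none =>
          rw [combine_none htv] at h
          rw [combine_none htv]
          exact hst v c h
      have himp : Implicant (fAnd f g) (combine (restr u X) s) := by
        intro b hb
        have hbt : Extends b (restr u X) := extends_combine_left hb
        have hbs : Extends b s := extends_combine_right hdis2 hb
        simp only [fAnd, Bool.and_eq_true]
        exact ⟨htimp b hbt, hsg b hbs⟩
      have heq := hu.2 (combine (restr u X) s) hsub himp
      replace heq := heq.trans hcomb
      funext v
      by_cases hy : v ∈ Y
      · have htv : restr u X v = none := restr_notMem (hnotYX v hy)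
        have h1 : combine (restr u X) s v = combine (restr u X) (restr u Y) v := by
          rw [heq]
        rw [combine_none htv, combine_none htv] at h1
        exact h1
      · cases hsv : s v with
        | some c => exact absurd (hsY v c hsv) hy
        | none => exact (restr_notMem hy).symm
    exact ⟨restr u X, ⟨htprime, hte⟩, restr u Y, ⟨ht'prime, ht'e⟩, hcomb⟩
  · rintro ⟨t, ⟨htp, hte⟩, t', ⟨ht'p, ht'e⟩, rfl⟩
    have hsuppt : ∀ v b, t v = some b → v ∈ X := prime_supp X f hf htp
    have hsuppt' : ∀ v b, t' v = some b → v ∈ Y := prime_supp Y g hg ht'p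
    have hdis : ∀ v c, t' v = some c → t v = none := by
      intro v c h
      cases htv : t v with
      | none => rfl
      | some d => exact absurd (hsuppt v d htv) (hnotYX v (hsuppt' v c h))
    have hext : Extends a (combine t t') := by
      intro v c h
      cases htv : t v with
      | some d =>
        rw [combine_some htv] at h
        exact hte v c (htv.trans h)
      | none =>
        rw [combine_none htv] at h
        exact ht'e v c h
    have himp : Implicant (fAnd f g) (combine t t') := by
      intro b hb
      simp only [fAnd, Bool.and_eq_true]
      exact ⟨htp.1 b (extends_combine_left hb), ht'p.1 b (extends_combine_right hdis hb)⟩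
    refine ⟨⟨himp, fun s hs hsimp => ?_⟩, hext⟩
    have hsa : Extends a s := fun v c h => hext v c (hs v c h)
    have hsf : Implicant f s := by
      intro b hb
      have := hsimp b hb
      simp only [fAnd, Bool.and_eq_true] at this
      exact this.1
    have hsg : Implicant g s := by
      intro b hb
      have := hsimp b hb
      simp only [fAnd, Bool.and_eq_true] at this
      exact this.2
    have hsXsub : SubTerm (restr s X) t := by
      intro v c h
      obtain ⟨hsv, hvX⟩ := restr_some h
      have hcv := hs v c hsv
      cases htv : t v with
      | some d =>
        rw [combine_some htv] at hcv
        exact hcv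
      | none =>
        rw [combine_none htv] at hcv
        exact absurd hvX (hnotYX v (hsuppt' v c hcv))
    have hsXimp : Implicant f (restr s X) :=
      implicant_restr X f hf a s hsf (fun v b h _ => hsa v b h)
    have heqX := htp.2 (restr s X) hsXsub hsXimp
    have hsYsub : SubTerm (restr s Y) t' := by
      intro v c h
      obtain ⟨hsv, hvY⟩ := restr_some h
      have hcv := hs v c hsv
      cases htv : t v with
      | some d => exact absurd (hsuppt v d htv) (hnotYX v hvY)
      | none =>
        rw [combine_none htv] at hcv
        exact hcv
    have hsYimp : Implicant g (restr s Y) :=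
      implicant_restr Y g hg a s hsg (fun v b h _ => hsa v b h)
    have heqY := ht'p.2 (restr s Y) hsYsub hsYimp
    funext v
    by_cases hx : v ∈ X
    · have ht'v : t' v = none := by
        cases ht'v : t' v with
        | none => rfl
        | some c => exact absurd (hsuppt' v c ht'v) (hnotXY v hx)
      have hsx : s v = t v := by rw [← heqX, restr_mem hx]
      rw [hsx]
      cases htv : t v with
      | some d => exact (combine_some htv).symm
      | none => rw [combine_none htv, ht'v]
    · by_cases hy : v ∈ Y
      · have htv : t v = none := by
          cases htv : t v with
          | none => rfl
          | some c => exact absurd (hsuppt v c htv) (hnotYX v hy)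
        have hsy : s v = t' v := by rw [← heqY, restr_mem hy]
        rw [hsy, combine_none htv]
      · have htv : t v = none := by
          cases htv : t v with
          | none => rfl
          | some c => exact absurd (hsuppt v c htv) hx
        have ht'v : t' v = none := by
          cases ht'v : t' v with
          | none => rfl
          | some c => exact absurd (hsuppt' v c ht'v) hy
        cases hsv : s v with
        | none => rw [combine_none htv, ht'v]
        | some c =>
          have hcv := hs v c hsv
          rw [combine_none htv, ht'v] at hcv
          exact absurd hcv (by simp)
end

section
/- Let f be a Boolean function, a a total assignment over a superset of var(f) satisfying f, x ∈ var(f), and ℓ the literal on x satisfied by a. Then SR(f, a) = {t ∧ ℓ : t ∈ SR(f|ℓ, a), t is not an implicant of f|¬ℓ} ∪ SR(f|¬x ∧ f|x, a). -/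
section Helpers

variable {V : Type*} [DecidableEq V]

omit [DecidableEq V] in
lemma implicant_mono {f : (V → Bool) → Bool} {s t : Term V}
    (h : SubTerm s t) (hs : Implicant f s) : Implicant f t :=
  fun a ha => hs a (fun v b hv => ha v b (h v b hv))

lemma subterm_update_none (t : Term V) (x : V) :
    SubTerm (Function.update t x none) t := by
  intro v b hv
  rcases eq_or_ne v x with rfl | hne
  · simp at hv
  · rwa [Function.update_of_ne hne] at hv

lemma extends_update_assign {d : V → Bool} {t : Term V} {x : V}
    (hd : Extends d t) (hx : t x = none) (b : Bool) :
    Extends (Function.update d x b) t := by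
  intro v c hv
  rcases eq_or_ne v x with rfl | hne
  · rw [hx] at hv; exact absurd hv (by simp)
  · rw [Function.update_of_ne hne]; exact hd v c hv

lemma restrict_ignores (f : (V → Bool) → Bool) (x : V) (b b' : Bool) (c : V → Bool) :
    restrict f x b (Function.update c x b') = restrict f x b c := by
  simp [restrict, Function.update_idem]

/-- If `g` ignores coordinate `x`, any prime implicant of `g` has `t x = none`. -/
lemma pi_x_none {g : (V → Bool) → Bool} {x : V}
    (hg : ∀ c b', g (Function.update c x b') = g c)
    {t : Term V} (ht : PrimeImplicant g t) : t x = none := by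
  have himp : Implicant g (Function.update t x none) := by
    intro c hc
    cases hx : t x with
    | none =>
      apply ht.1 c
      intro v b hv
      rcases eq_or_ne v x with rfl | hne
      · rw [hx] at hv; exact absurd hv (by simp)
      · exact hc v b (by rwa [Function.update_of_ne hne])
    | some b =>
      rw [← hg c b]
      apply ht.1
      intro v b' hv
      rcases eq_or_ne v x with rfl | hne
      · rw [hx] at hv; injection hv with h; rw [Function.update_self, h]
      · rw [Function.update_of_ne hne]
        exact hc v b' (by rwa [Function.update_of_ne hne])
  have heq := ht.2 _ (subterm_update_none t x) himp
  rw [← heq, Function.update_self]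

lemma fAnd_restrict_ignores (f : (V → Bool) → Bool) (x : V) (b' : Bool) (c : V → Bool) :
    fAnd (restrict f x false) (restrict f x true) (Function.update c x b') =
      fAnd (restrict f x false) (restrict f x true) c := by
  simp [fAnd, restrict_ignores]

end Helpers

/-- SR(f,a) = {t ∧ ℓ : t ∈ SR(f|ℓ,a), t ⊭ f|¬ℓ} ∪ SR(f|¬x ∧ f|x, a),
where ℓ is the literal on x satisfied by a. -/
theorem stmt12 {V : Type*} [DecidableEq V] (f : (V → Bool) → Bool) (x : V)
    (a : V → Bool) (ha : f a = true) :
    SR f a =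
      {u | ∃ t ∈ SR (restrict f x (a x)) a,
            ¬ Implicant (restrict f x (!(a x))) t ∧
            u = Function.update t x (some (a x))} ∪
      SR (fAnd (restrict f x false) (restrict f x true)) a := by
  ext u
  constructor
  · rintro ⟨⟨himp, hprime⟩, hext⟩
    cases hu : u x with
    | none =>
      -- u does not mention x; it is a prime implicant of the conjunction
      right
      refine ⟨⟨?_, ?_⟩, hext⟩
      · intro c hc
        have h0 : f (Function.update c x false) = true :=
          himp _ (extends_update_assign hc hu false)
        have h1 : f (Function.update c x true) = true :=
          himp _ (extends_update_assign hc hu true)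
        simp [fAnd, restrict, h0, h1]
      · intro s hs hsimp
        apply hprime s hs
        intro c hc
        have := hsimp c hc
        simp only [fAnd, restrict, Bool.and_eq_true] at this
        cases hcx : c x with
        | false =>
          have h' := this.1
          have heq : Function.update c x false = c := by
            rw [← hcx, Function.update_eq_self]
          rwa [heq] at h'
        | true =>
          have h' := this.2
          have heq : Function.update c x true = c := by
            rw [← hcx, Function.update_eq_self]
          rwa [heq] at h'
    | some b =>
      -- u mentions x; necessarily with value a x
      left
      have hb : b = a x := (hext x b hu).symm
      subst hb
      set t : Term V := Function.update u x none with ht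
      have htu : u = Function.update t x (some (a x)) := by
        funext v
        rcases eq_or_ne v x with rfl | hne
        · rw [Function.update_self, hu]
        · rw [Function.update_of_ne hne, ht, Function.update_of_ne hne]
      have htsub : SubTerm t u := subterm_update_none u x
      have htimp : Implicant (restrict f x (a x)) t := by
        intro d hd
        apply himp
        intro v c hv
        rcases eq_or_ne v x with rfl | hne
        · rw [hu] at hv; injection hv with h
          rw [Function.update_self, h]
        · rw [Function.update_of_ne hne]
          exact hd v c (by rw [ht, Function.update_of_ne hne]; exact hv)
      refine ⟨t, ⟨⟨htimp, ?_⟩, fun v c hv => hext v c (htsub v c hv)⟩, ?_, htu⟩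
      · -- primality of t for restrict f x (a x)
        intro s hs hsimp
        have hsx : s x = none := by
          cases hsx : s x with
          | none => rfl
          | some c => have := hs x c hsx; rw [ht, Function.update_self] at this; exact absurd this (by simp)
        have hs'imp : Implicant f (Function.update s x (some (a x))) := by
          intro d hd
          have hdx : d x = a x := hd x (a x) (by rw [Function.update_self])
          have hds : Extends d s := by
            intro v c hv
            rcases eq_or_ne v x with rfl | hne
            · rw [hsx] at hv; exact absurd hv (by simp)
            · exact hd v c (by rwa [Function.update_of_ne hne])
          have := hsimp d hds
          have heq : Function.update d x (a x) = d := by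
            rw [← hdx, Function.update_eq_self]
          rwa [restrict, heq] at this
        have hs'sub : SubTerm (Function.update s x (some (a x))) u := by
          intro v c hv
          rcases eq_or_ne v x with rfl | hne
          · rw [Function.update_self] at hv; rw [hu, hv]
          · rw [Function.update_of_ne hne] at hv
            exact htsub v c (hs v c hv)
        have heq := hprime _ hs'sub hs'imp
        funext v
        rcases eq_or_ne v x with rfl | hne
        · rw [hsx, ht, Function.update_self]
        · have : Function.update s x (some (a x)) v = u v := by rw [heq]
          rw [Function.update_of_ne hne] at this
          rw [this, ht, Function.update_of_ne hne]
      · -- t is not an implicant of restrict f x (!(a x))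
        intro hcon
        have htf : Implicant f t := by
          intro d hd
          by_cases hdx : d x = a x
          · have := htimp d hd
            have heq : Function.update d x (a x) = d := by
              rw [← hdx, Function.update_eq_self]
            rwa [restrict, heq] at this
          · have hdx' : d x = !(a x) := by
              cases h1 : a x <;> cases h2 : d x <;> simp [h1, h2] at hdx ⊢
            have := hcon d hd
            have heq : Function.update d x (!(a x)) = d := by
              rw [← hdx', Function.update_eq_self]
            rwa [restrict, heq] at this
        have := hprime t htsub htf
        rw [← this, ht, Function.update_self] at hu
        exact absurd hu (by simp)
  · rintro (⟨t, ⟨⟨htimp, htprime⟩, htext⟩, hnot, rfl⟩ | ⟨⟨himp, hprime⟩, hext⟩)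
    · -- left case
      have htx : t x = none :=
        pi_x_none (fun c b' => restrict_ignores f x (a x) b' c) ⟨htimp, htprime⟩
      have huext : Extends a (Function.update t x (some (a x))) := by
        intro v c hv
        rcases eq_or_ne v x with rfl | hne
        · rw [Function.update_self] at hv; exact Option.some_injective _ hv
        · rw [Function.update_of_ne hne] at hv; exact htext v c hv
      have hdext : ∀ d : V → Bool, Extends d (Function.update t x (some (a x))) →
          d x = a x ∧ Extends d t := by
        intro d hd
        refine ⟨hd x (a x) (by rw [Function.update_self]), ?_⟩
        intro v c hv
        rcases eq_or_ne v x with rfl | hne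
        · rw [htx] at hv; exact absurd hv (by simp)
        · exact hd v c (by rwa [Function.update_of_ne hne])
      refine ⟨⟨?_, ?_⟩, huext⟩
      · intro d hd
        obtain ⟨hdx, hdt⟩ := hdext d hd
        have := htimp d hdt
        have heq : Function.update d x (a x) = d := by
          rw [← hdx, Function.update_eq_self]
        rwa [restrict, heq] at this
      · intro s hs hsimp
        cases hsx : s x with
        | none =>
          exfalso
          apply hnot
          have hst : SubTerm s t := by
            intro v c hv
            rcases eq_or_ne v x with rfl | hne
            · rw [hsx] at hv; exact absurd hv (by simp)
            · have := hs v c hv; rwa [Function.update_of_ne hne] at this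
          refine implicant_mono hst ?_
          intro d hd
          exact hsimp _ (extends_update_assign hd hsx (!(a x)))
        | some b =>
          have hb : b = a x := by
            have := hs x b hsx; rw [Function.update_self] at this
            exact (Option.some_injective _ this).symm
          subst hb
          have hs'sub : SubTerm (Function.update s x none) t := by
            intro v c hv
            rcases eq_or_ne v x with rfl | hne
            · simp at hv
            · rw [Function.update_of_ne hne] at hv
              have := hs v c hv; rwa [Function.update_of_ne hne] at this
          have hs'imp : Implicant (restrict f x (a x)) (Function.update s x none) := by
            intro d hd
            apply hsimp
            intro v c hv
            rcases eq_or_ne v x with rfl | hne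
            · rw [hsx] at hv; injection hv with h
              rw [Function.update_self, h]
            · rw [Function.update_of_ne hne]
              exact hd v c (by rwa [Function.update_of_ne hne])
          have heq := htprime _ hs'sub hs'imp
          funext v
          rcases eq_or_ne v x with rfl | hne
          · rw [hsx, Function.update_self]
          · rw [Function.update_of_ne hne, ← heq, Function.update_of_ne hne]
    · -- right case
      have hux : u x = none :=
        pi_x_none (fun c b' => fAnd_restrict_ignores f x b' c) ⟨himp, hprime⟩
      refine ⟨⟨?_, ?_⟩, hext⟩
      · intro d hd
        have := himp d hd
        simp only [fAnd, restrict, Bool.and_eq_true] at this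
        cases hdx : d x with
        | false =>
          have h' := this.1
          have heq : Function.update d x false = d := by
            rw [← hdx, Function.update_eq_self]
          rwa [heq] at h'
        | true =>
          have h' := this.2
          have heq : Function.update d x true = d := by
            rw [← hdx, Function.update_eq_self]
          rwa [heq] at h'
      · intro s hs hsimp
        apply hprime s hs
        have hsx : s x = none := by
          cases hsx : s x with
          | none => rfl
          | some c => have := hs x c hsx; rw [hux] at this; exact absurd this (by simp)
        intro d hd
        have h0 : f (Function.update d x false) = true :=
          hsimp _ (extends_update_assign hd hsx false)
        have h1 : f (Function.update d x true) = true :=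
          hsimp _ (extends_update_assign hd hsx true)
        simp [fAnd, restrict, h0, h1]
end
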